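/- If N̂ ~ Poisson(N) with N ≥ 1, then E[exp(N/(2(N̂+1)))] ≤ 2. -/

import Mathlib

open scoped ENNReal

lemma choose_le_pow_succ (n : ℕ) : ∀ j : ℕ, (n + j).choose j ≤ (n + 1) ^ j := by
  intro j
  induction j with
  | zero => simp
  | succ j ih =>
    have h1 : (n + j + 1) * (n + j).choose j = (n + (j + 1)).choose (j + 1) * (j + 1) := by
      have := Nat.add_one_mul_choose_eq (n + j) j
      simpa [Nat.succ_eq_add_one, Nat.add_assoc] using this
    have h2 : (n + (j + 1)).choose (j + 1) * (j + 1) ≤ (n + 1) ^ (j + 1) * (j + 1) := by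
      rw [← h1]
      calc (n + j + 1) * (n + j).choose j ≤ ((j + 1) * (n + 1)) * ((n + 1) ^ j) := by
            apply Nat.mul_le_mul _ ih
            nlinarith
        _ = (n + 1) ^ (j + 1) * (j + 1) := by ring
    exact Nat.le_of_mul_le_mul_right h2 (Nat.succ_pos j)

lemma factorial_ineq (n j : ℕ) : ((n + j).factorial : ℝ) ≤
    (n.factorial : ℝ) * (j.factorial : ℝ) * ((n : ℝ) + 1) ^ j := by
  have h : ((n + j).choose j : ℝ) ≤ ((n : ℝ) + 1) ^ j := by
    exact_mod_cast choose_le_pow_succ n j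
  have h2 : ((n + j).factorial : ℝ)
      = ((n + j).choose j : ℝ) * (n.factorial : ℝ) * (j.factorial : ℝ) := by
    exact_mod_cast (Nat.add_choose_mul_factorial_mul_factorial n j).symm
  rw [h2]
  have hn : (0:ℝ) ≤ (n.factorial : ℝ) * (j.factorial : ℝ) := by positivity
  calc ((n + j).choose j : ℝ) * (n.factorial : ℝ) * (j.factorial : ℝ)
      = ((n.factorial : ℝ) * (j.factorial : ℝ)) * ((n + j).choose j : ℝ) := by ring
    _ ≤ ((n.factorial : ℝ) * (j.factorial : ℝ)) * (((n : ℝ) + 1) ^ j) := by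
        exact mul_le_mul_of_nonneg_left h hn
    _ = (n.factorial : ℝ) * (j.factorial : ℝ) * ((n : ℝ) + 1) ^ j := by ring

lemma term_le (N : ℝ) (hN0 : 0 ≤ N) (n j : ℕ) :
    N ^ n / (n.factorial : ℝ) * ((N / (2 * ((n : ℝ) + 1))) ^ j / (j.factorial : ℝ))
      ≤ N ^ (n + j) / ((2:ℝ) ^ j * ((n + j).factorial : ℝ)) := by
  have hn1 : (0:ℝ) < (n : ℝ) + 1 := by positivity
  have hfacn : (0:ℝ) < (n.factorial : ℝ) := by exact_mod_cast n.factorial_pos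
  have hfacj : (0:ℝ) < (j.factorial : ℝ) := by exact_mod_cast j.factorial_pos
  have hfacnj : (0:ℝ) < ((n + j).factorial : ℝ) := by exact_mod_cast (n + j).factorial_pos
  have hL : N ^ n / (n.factorial : ℝ) * ((N / (2 * ((n : ℝ) + 1))) ^ j / (j.factorial : ℝ))
      = N ^ (n + j) / ((2:ℝ) ^ j * ((n.factorial : ℝ) * (j.factorial : ℝ) * ((n : ℝ) + 1) ^ j)) := by
    rw [div_pow, mul_pow, pow_add]
    field_simp
  rw [hL]
  have hle : (2:ℝ) ^ j * ((n + j).factorial : ℝ)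
      ≤ (2:ℝ) ^ j * ((n.factorial : ℝ) * (j.factorial : ℝ) * ((n : ℝ) + 1) ^ j) :=
    mul_le_mul_of_nonneg_left (factorial_ineq n j) (by positivity)
  exact div_le_div_of_nonneg_left (pow_nonneg hN0 _) (by positivity) hle

/-- If `N̂ ~ Poisson(N)` with `N ≥ 1`, then `E[exp(N/(2(N̂+1)))] ≤ 2`.
The expectation is written as a sum against the Poisson probability mass
function `P(N̂ = n) = exp(-N) N^n / n!`. -/
theorem poisson_exp_inverse_moment_le_two (N : ℝ) (hN : 1 ≤ N) :
    ∑' n : ℕ, Real.exp (-N) * N ^ n / (Nat.factorial n : ℝ)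
        * Real.exp (N / (2 * ((n : ℝ) + 1))) ≤ 2 := by
  have hN0 : (0:ℝ) ≤ N := le_trans zero_le_one hN
  set a : ℕ → ℝ := fun n => Real.exp (-N) * N ^ n / (Nat.factorial n : ℝ)
      * Real.exp (N / (2 * ((n : ℝ) + 1))) with ha_def
  have ha : ∀ n, 0 ≤ a n := fun n => by
    simp only [ha_def]
    positivity
  -- the summand after expanding the inner exponential as a series
  set F : ℕ → ℕ → ℝ := fun n j =>
    Real.exp (-N) * (N ^ n / (Nat.factorial n : ℝ)
      * ((N / (2 * ((n : ℝ) + 1))) ^ j / (Nat.factorial j : ℝ))) with hF_def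
  have hF_nonneg : ∀ n j, 0 ≤ F n j := fun n j => by
    simp only [hF_def]
    positivity
  -- majorant in the double sum
  set g : ℕ × ℕ → ℝ≥0∞ := fun q =>
    ENNReal.ofReal (Real.exp (-N)) *
      (ENNReal.ofReal (N ^ q.1 / (Nat.factorial q.1 : ℝ)) *
        ENNReal.ofReal ((1/2 : ℝ) ^ q.2)) with hg_def
  have key : ∑' n, ENNReal.ofReal (a n) ≤ 2 := by
    have expand : ∀ n : ℕ, ENNReal.ofReal (a n) = ∑' j : ℕ, ENNReal.ofReal (F n j) := by
      intro n
      have hx : Real.exp (N / (2 * ((n : ℝ) + 1)))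
          = ∑' j : ℕ, (N / (2 * ((n : ℝ) + 1))) ^ j / (Nat.factorial j : ℝ) := by
        rw [Real.exp_eq_exp_ℝ, NormedSpace.exp_eq_tsum_div]
      have hsum : Summable (F n) :=
        ((Real.summable_pow_div_factorial _).mul_left _).mul_left _
      rw [← ENNReal.ofReal_tsum_of_nonneg (hF_nonneg n) hsum]
      congr 1
      simp only [hF_def]
      rw [tsum_mul_left, tsum_mul_left, ← hx, ha_def]
      ring
    have step1 : ∀ n j : ℕ, ENNReal.ofReal (F n j) ≤ g (n + j, j) := by
      intro n j
      have hb : F n j ≤ Real.exp (-N) * (N ^ (n + j) / (Nat.factorial (n + j) : ℝ)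
          * (1/2 : ℝ) ^ j) := by
        simp only [hF_def]
        have := term_le N hN0 n j
        have hexp : (0:ℝ) ≤ Real.exp (-N) := (Real.exp_pos _).le
        have heq : N ^ (n + j) / ((2:ℝ) ^ j * ((n + j).factorial : ℝ))
            = N ^ (n + j) / (Nat.factorial (n + j) : ℝ) * (1/2 : ℝ) ^ j := by
          rw [div_pow]
          have : ((n+j).factorial : ℝ) ≠ 0 := by
            exact_mod_cast (n+j).factorial_ne_zero
          field_simp
          ring
        rw [← heq]
        exact mul_le_mul_of_nonneg_left this hexp
      calc ENNReal.ofReal (F n j)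
          ≤ ENNReal.ofReal (Real.exp (-N) * (N ^ (n + j) / (Nat.factorial (n + j) : ℝ)
              * (1/2 : ℝ) ^ j)) := ENNReal.ofReal_le_ofReal hb
        _ = g (n + j, j) := by
            simp only [hg_def]
            rw [ENNReal.ofReal_mul (Real.exp_pos _).le,
              ENNReal.ofReal_mul (by positivity : (0:ℝ) ≤ N ^ (n + j) / (Nat.factorial (n + j) : ℝ))]
    calc ∑' n, ENNReal.ofReal (a n)
        = ∑' n, ∑' j, ENNReal.ofReal (F n j) := tsum_congr expand
      _ ≤ ∑' n, ∑' j, g (n + j, j) := by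
          gcongr with n j
          exact step1 n j
      _ = ∑' p : ℕ × ℕ, g (p.1 + p.2, p.2) :=
          (ENNReal.tsum_prod' (f := fun p : ℕ × ℕ => g (p.1 + p.2, p.2))).symm
      _ ≤ ∑' q : ℕ × ℕ, g q := by
          apply ENNReal.tsum_comp_le_tsum_of_injective
          intro p q h
          simp only [Prod.mk.injEq] at h
          obtain ⟨h1, h2⟩ := h
          exact Prod.ext (by omega) h2
      _ = ENNReal.ofReal (Real.exp (-N)) *
            ((∑' m : ℕ, ENNReal.ofReal (N ^ m / (Nat.factorial m : ℝ))) *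
              (∑' j : ℕ, ENNReal.ofReal ((1/2 : ℝ) ^ j))) := by
          rw [ENNReal.tsum_prod']
          simp only [hg_def]
          calc ∑' (m : ℕ) (j : ℕ), ENNReal.ofReal (Real.exp (-N)) *
                  (ENNReal.ofReal (N ^ m / (Nat.factorial m : ℝ)) * ENNReal.ofReal ((1/2 : ℝ) ^ j))
              = ∑' (m : ℕ), ENNReal.ofReal (Real.exp (-N)) *
                  (ENNReal.ofReal (N ^ m / (Nat.factorial m : ℝ)) *
                    ∑' (j : ℕ), ENNReal.ofReal ((1/2 : ℝ) ^ j)) :=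
                tsum_congr fun m => by rw [ENNReal.tsum_mul_left, ENNReal.tsum_mul_left]
            _ = ENNReal.ofReal (Real.exp (-N)) *
                  ((∑' m : ℕ, ENNReal.ofReal (N ^ m / (Nat.factorial m : ℝ))) *
                    (∑' j : ℕ, ENNReal.ofReal ((1/2 : ℝ) ^ j))) := by
                rw [ENNReal.tsum_mul_left, ENNReal.tsum_mul_right]
      _ = ENNReal.ofReal (Real.exp (-N)) * (ENNReal.ofReal (Real.exp N) * ENNReal.ofReal 2) := by
          congr 1
          congr 1
          · rw [← ENNReal.ofReal_tsum_of_nonneg (fun m => by positivity)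
              (Real.summable_pow_div_factorial N)]
            congr 1
            rw [Real.exp_eq_exp_ℝ, NormedSpace.exp_eq_tsum_div]
          · rw [← ENNReal.ofReal_tsum_of_nonneg (fun j => by positivity)
              (summable_geometric_of_lt_one (by norm_num) (by norm_num))]
            rw [tsum_geometric_two]
      _ = 2 := by
          rw [← ENNReal.ofReal_mul (by positivity : (0:ℝ) ≤ Real.exp N),
            ← ENNReal.ofReal_mul (Real.exp_pos _).le, ← mul_assoc, ← Real.exp_add]
          norm_num
  have htoReal : ∀ n : ℕ, (ENNReal.ofReal (a n)).toReal = a n :=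
    fun n => ENNReal.toReal_ofReal (ha n)
  calc ∑' n, a n = ∑' n, (ENNReal.ofReal (a n)).toReal := by
        exact tsum_congr fun n => (htoReal n).symm
    _ = (∑' n, ENNReal.ofReal (a n)).toReal :=
        (ENNReal.tsum_toReal_eq fun n => ENNReal.ofReal_ne_top).symm
    _ ≤ (2 : ℝ≥0∞).toReal := ENNReal.toReal_mono (by norm_num) key
    _ = 2 := by norm_num
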